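/- Let B be a unital associative F-algebra and let e₁, e₂ be idempotents in B with e₁ e₂ = 0 = e₂ e₁. Let I be the two-sided ideal of B generated by all commutators [p, a] = p a − a p with p an idempotent of B and a ∈ B. Then every homomorphism of left B-modules g : Be₁ → Be₂ has image contained in Ie₂ = { x e₂ : x ∈ I }. -/

import Mathlib

/-- if `e₁, e₂` are orthogonal idempotents in `B`, every `B`-module
homomorphism `g : Be₁ → Be₂` has image contained in `Ie₂`, where `I` is the two-sided
ideal generated by all commutators of idempotents with arbitrary elements. -/
theorem stmt_15 (F B : Type*) [Field F] [Ring B] [Algebra F B]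
    (e₁ e₂ : B) (h₁ : IsIdempotentElem e₁) (h₂ : IsIdempotentElem e₂)
    (h₁₂ : e₁ * e₂ = 0) (h₂₁ : e₂ * e₁ = 0)
    (g : ↥(Ideal.span {e₁} : Ideal B) →ₗ[B] ↥(Ideal.span {e₂} : Ideal B)) :
    ∀ x, (g x : B) ∈
      {y : B | ∃ i ∈ TwoSidedIdeal.span
        {c : B | ∃ p a : B, IsIdempotentElem p ∧ c = p * a - a * p}, i * e₂ = y} := by
  intro x
  set m : ↥(Ideal.span ({e₁} : Set B)) := ⟨e₁, Ideal.subset_span rfl⟩ with hm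
  -- x = x • m
  have hx : (x : B) * e₁ = (x : B) := by
    obtain ⟨c, hc⟩ := Ideal.mem_span_singleton'.mp x.2
    rw [← hc, mul_assoc, h₁]
  have hxm : x = (x : B) • m := Subtype.ext (by simp [hm, hx])
  -- y := g m satisfies y * e₂ = y and e₁ * y = y
  have hy : (g m : B) * e₂ = (g m : B) := by
    obtain ⟨c, hc⟩ := Ideal.mem_span_singleton'.mp (g m).2
    rw [← hc, mul_assoc, h₂]
  have hey : e₁ • m = m := Subtype.ext (by simpa [hm] using h₁.eq)
  have he : e₁ * (g m : B) = (g m : B) := by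
    conv_rhs => rw [← hey]
    rw [map_smul]
    rfl
  have hmem : (g m : B) ∈ TwoSidedIdeal.span
      {c : B | ∃ p a : B, IsIdempotentElem p ∧ c = p * a - a * p} := by
    have key : (g m : B) = e₁ * ((g m : B) * e₂) - ((g m : B) * e₂) * e₁ := by
      have h0 : ((g m : B) * e₂) * e₁ = 0 := by rw [mul_assoc, h₂₁, mul_zero]
      rw [h0, sub_zero, hy, he]
    rw [key]
    exact TwoSidedIdeal.subset_span ⟨e₁, (g m : B) * e₂, h₁, rfl⟩
  refine ⟨(x : B) * (g m : B), TwoSidedIdeal.mul_mem_left _ _ _ hmem, ?_⟩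
  have hgx : (g x : B) = (x : B) * (g m : B) := by
    conv_lhs => rw [hxm, map_smul]
    rfl
  rw [hgx, mul_assoc, hy]
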